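/- For every c ∈ (0,1) there exist a twice continuously differentiable nonconstant function r : ℝ → ℝ with 0 < r(t) < 1 for all t, and a number T > 0 with r(t + T) = r(t) for all t ∈ ℝ, such that r satisfies (1 − r(t)²)·r(t)·r''(t) = (1 − 2 r(t)²)·(2 r'(t)² + r(t)²(1 − r(t)²)) for all t ∈ ℝ and r'(t)²/(r(t)⁴(1 − r(t)²)²) + 1/(r(t)²(1 − r(t)²)) = 4/c² for all t ∈ ℝ. -/

import Mathlib

open Real

noncomputable section
namespace MT

def U (a x : ℝ) : ℝ := (1 + a * Real.sin x) / 2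
def V (a x : ℝ) : ℝ := (1 - a * Real.sin x) / 2
def G (c a x : ℝ) : ℝ := 4 / c * U a x * Real.sqrt (V a x)
def D1 (c a x : ℝ) : ℝ := a / c * Real.cos x * (Real.sqrt (U a x) * Real.sqrt (V a x))
def D2 (c a x : ℝ) : ℝ :=
  a / c * -Real.sin x * (Real.sqrt (U a x) * Real.sqrt (V a x)) +
    a / c * Real.cos x *
      (a * Real.cos x / 2 / (2 * Real.sqrt (U a x)) * Real.sqrt (V a x) +
        Real.sqrt (U a x) * (-(a * Real.cos x) / 2 / (2 * Real.sqrt (V a x))))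

lemma hasDerivAt_U (a x : ℝ) : HasDerivAt (U a) (a * Real.cos x / 2) x := by
  have h := (((Real.hasDerivAt_sin x).const_mul a).const_add 1).div_const 2
  exact h

lemma hasDerivAt_V (a x : ℝ) : HasDerivAt (V a) (-(a * Real.cos x) / 2) x := by
  have h := (((Real.hasDerivAt_sin x).const_mul a).const_sub 1).div_const 2
  exact h

lemma alg_conserved (c a s co p q : ℝ) (hc : c ≠ 0)
    (hco : co ^ 2 = 1 - s ^ 2) (hp2 : p ^ 2 = (1 + a * s) / 2)
    (hq2 : q ^ 2 = (1 - a * s) / 2) (ha2 : a ^ 2 = 1 - c ^ 2)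
    (hp : p ≠ 0) (hq : q ≠ 0) :
    (a / c * co * (p * q)) ^ 2 / (p ^ 4 * (1 - p ^ 2) ^ 2) + 1 / (p ^ 2 * (1 - p ^ 2))
      = 4 / c ^ 2 := by
  have h1 : 1 - p ^ 2 = q ^ 2 := by linarith
  rw [h1]
  field_simp
  linear_combination a^2*hco + ha2 - 4*q^2*hp2 - 2*(1+a*s)*hq2

lemma alg_ode (c a s co p q : ℝ) (hc : c ≠ 0)
    (hco : co ^ 2 = 1 - s ^ 2) (hp2 : p ^ 2 = (1 + a * s) / 2)
    (hq2 : q ^ 2 = (1 - a * s) / 2) (ha2 : a ^ 2 = 1 - c ^ 2)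
    (hp : p ≠ 0) (hq : q ≠ 0) :
    (1 - p ^ 2) * p *
      ((a / c * -s * (p * q) +
        a / c * co * (a * co / 2 / (2 * p) * q + p * (-(a * co) / 2 / (2 * q)))) *
       (4 / c * ((1 + a * s) / 2) * q))
    = (1 - 2 * p ^ 2) * (2 * (a / c * co * (p * q)) ^ 2 + p ^ 2 * (1 - p ^ 2)) := by
  have h1 : 1 - p ^ 2 = q ^ 2 := by linarith
  rw [← hp2, h1]
  field_simp
  linear_combination (4*a^3*s) * hco + (4*a*s) * ha2
    + (4*(-4*a*s*q^2 + 3*a^2*co^2 + 2*c^2)) * hp2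
    + (4*(-2*a*s*(1+a*s) + a^2*co^2)) * hq2

end MT

open Real MT Filter
set_option maxHeartbeats 1000000 in
theorem exists_periodic_nonconstant_solution :
    ∀ c ∈ Set.Ioo (0 : ℝ) 1, ∃ (r : ℝ → ℝ) (T : ℝ),
      ContDiff ℝ 2 r ∧
      (¬ ∀ t₁ t₂ : ℝ, r t₁ = r t₂) ∧
      (∀ t : ℝ, 0 < r t ∧ r t < 1) ∧
      0 < T ∧
      (∀ t : ℝ, r (t + T) = r t) ∧
      (∀ t : ℝ, (1 - r t ^ 2) * r t * deriv (deriv r) t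
        = (1 - 2 * r t ^ 2) * (2 * (deriv r t) ^ 2 + r t ^ 2 * (1 - r t ^ 2))) ∧
      (∀ t : ℝ,
        (deriv r t) ^ 2 / (r t ^ 4 * (1 - r t ^ 2) ^ 2) + 1 / (r t ^ 2 * (1 - r t ^ 2))
          = 4 / c ^ 2) := by
  rintro c ⟨hc0, hc1⟩
  set a : ℝ := Real.sqrt (1 - c ^ 2) with ha_def
  have ha2 : a ^ 2 = 1 - c ^ 2 := Real.sq_sqrt (by nlinarith)
  have ha0 : 0 < a := Real.sqrt_pos.mpr (by nlinarith)
  have ha1 : a < 1 := by nlinarith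
  -- bounds on U, V
  have hUpos : ∀ x, 0 < U a x := fun x => by
    have h := Real.neg_one_le_sin x; unfold U; nlinarith
  have hUlt : ∀ x, U a x < 1 := fun x => by
    have h := Real.sin_le_one x; unfold U; nlinarith
  have hVpos : ∀ x, 0 < V a x := fun x => by
    have h := Real.sin_le_one x; unfold V; nlinarith
  have hVlt : ∀ x, V a x < 1 := fun x => by
    have h := Real.neg_one_le_sin x; unfold V; nlinarith
  have hsU : ∀ x, 0 < Real.sqrt (U a x) := fun x => Real.sqrt_pos.mpr (hUpos x)
  have hsV : ∀ x, 0 < Real.sqrt (V a x) := fun x => Real.sqrt_pos.mpr (hVpos x)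
  -- continuity
  have cU : Continuous (U a) := by unfold U; fun_prop
  have cV : Continuous (V a) := by unfold V; fun_prop
  have csU : Continuous (fun x => Real.sqrt (U a x)) := cU.sqrt
  have csV : Continuous (fun x => Real.sqrt (V a x)) := cV.sqrt
  have cG : Continuous (G c a) := by
    unfold G; exact (continuous_const.mul cU).mul csV
  have hGpos : ∀ x, 0 < G c a x := fun x => by
    unfold G
    have h4 : 0 < 4 / c := by positivity
    exact mul_pos (mul_pos h4 (hUpos x)) (hsV x)
  have hGle : ∀ x, G c a x ≤ 4 / c := fun x => by
    unfold G
    have h1 : Real.sqrt (V a x) ≤ 1 := by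
      rw [show (1:ℝ) = Real.sqrt 1 by simp]
      exact Real.sqrt_le_sqrt (hVlt x).le
    have h4 : 0 < 4 / c := by positivity
    have h2 : U a x * Real.sqrt (V a x) ≤ 1 :=
      mul_le_one₀ (hUlt x).le (Real.sqrt_nonneg _) h1
    calc 4 / c * U a x * Real.sqrt (V a x) = 4 / c * (U a x * Real.sqrt (V a x)) := by ring
      _ ≤ 4 / c * 1 := mul_le_mul_of_nonneg_left h2 h4.le
      _ = 4 / c := mul_one _
  have cGi : Continuous fun x => (G c a x)⁻¹ := cG.inv₀ fun x => (hGpos x).ne'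
  have hint : ∀ s t : ℝ, IntervalIntegrable (fun x => (G c a x)⁻¹)
      MeasureTheory.volume s t := fun s t => cGi.intervalIntegrable s t
  set τ : ℝ → ℝ := fun y => ∫ x in (0:ℝ)..y, (G c a x)⁻¹ with hτ_def
  have hτd : ∀ y, HasDerivAt τ (G c a y)⁻¹ y := fun y =>
    intervalIntegral.integral_hasDerivAt_right (hint 0 y)
      (cGi.stronglyMeasurableAtFilter _ _) cGi.continuousAt
  have τmono : StrictMono τ := strictMono_of_deriv_pos fun y => by
    rw [(hτd y).deriv]; exact inv_pos.mpr (hGpos y)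
  have τcont : Continuous τ := continuous_iff_continuousAt.mpr fun y =>
    (hτd y).continuousAt
  -- lower/upper linear bounds for surjectivity
  have hptwise : ∀ x : ℝ, c / 4 ≤ (G c a x)⁻¹ := fun x => by
    have h := inv_anti₀ (hGpos x) (hGle x)
    rwa [inv_div] at h
  have hlow : ∀ y : ℝ, 0 ≤ y → y * (c / 4) ≤ τ y := fun y hy => by
    have h := intervalIntegral.integral_mono_on hy
      (intervalIntegrable_const (c := c / 4)) (hint 0 y)
      (fun x _ => hptwise x)
    simp only [intervalIntegral.integral_const, smul_eq_mul, sub_zero] at h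
    rw [hτ_def]
    linarith
  have hup : ∀ y : ℝ, y ≤ 0 → τ y ≤ y * (c / 4) := fun y hy => by
    have h := intervalIntegral.integral_mono_on hy
      (intervalIntegrable_const (c := c / 4)) (hint y 0)
      (fun x _ => hptwise x)
    have hsymm : τ y = -∫ x in y..(0:ℝ), (G c a x)⁻¹ := by
      rw [hτ_def]; exact intervalIntegral.integral_symm y 0
    rw [hsymm]
    simp only [intervalIntegral.integral_const, smul_eq_mul, zero_sub] at h
    linarith
  have hc4 : 0 < c / 4 := by positivity
  have ttop : Tendsto τ atTop atTop :=
    tendsto_atTop_mono' atTop ((eventually_ge_atTop (0:ℝ)).mono hlow)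
      (Tendsto.atTop_mul_const hc4 tendsto_id)
  have tbot : Tendsto τ atBot atBot :=
    tendsto_atBot_mono' atBot ((eventually_le_atBot (0:ℝ)).mono hup)
      (Tendsto.atBot_mul_const hc4 tendsto_id)
  have τsurj : Function.Surjective τ := τcont.surjective ttop tbot
  set e : ℝ ≃o ℝ := StrictMono.orderIsoOfSurjective τ τmono τsurj with he_def
  set φ : ℝ → ℝ := fun t => e.symm t with hφ_def
  have hcoe : ∀ y, e y = τ y := fun y => rfl
  have hτφ : ∀ t, τ (φ t) = t := fun t => by
    rw [← hcoe]; exact e.apply_symm_apply t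
  have hφτ : ∀ y, φ (τ y) = y := fun y => by
    rw [hφ_def]; simp only [← hcoe]; exact e.symm_apply_apply y
  have φcont : Continuous φ := (e.symm).continuous
  have hφd : ∀ t, HasDerivAt φ (G c a (φ t)) t := fun t => by
    have h := HasDerivAt.of_local_left_inverse φcont.continuousAt (hτd (φ t))
      (inv_ne_zero (hGpos (φ t)).ne') (Filter.Eventually.of_forall hτφ)
    rwa [inv_inv] at h
  -- periodicity
  have hGiper : Function.Periodic (fun x => (G c a x)⁻¹) (2 * π) := fun x => by
    simp only [G, U, V, Real.sin_add_two_pi]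
  set T : ℝ := τ (2 * π) with hT_def
  have hτ0 : τ 0 = 0 := intervalIntegral.integral_same
  have hT : 0 < T := by
    have := τmono Real.two_pi_pos; rwa [hτ0] at this
  have hτadd : ∀ y, τ (y + 2 * π) = τ y + T := fun y => by
    have h1 := intervalIntegral.integral_add_adjacent_intervals (μ := MeasureTheory.volume)
      (hint 0 y) (hint y (y + 2 * π))
    have h2 := hGiper.intervalIntegral_add_eq y 0
    rw [hτ_def]
    simp only []
    rw [← h1, h2, zero_add]
  have hφadd : ∀ t, φ (t + T) = φ t + 2 * π := fun t =>
    τmono.injective (by rw [hτφ, hτadd, hτφ])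
  -- derivative computations
  have hD1eq : ∀ x, a * Real.cos x / 2 / (2 * Real.sqrt (U a x)) * G c a x
      = D1 c a x := fun x => by
    have hU' : Real.sqrt (U a x) * Real.sqrt (U a x) = U a x :=
      Real.mul_self_sqrt (hUpos x).le
    have hsu := (hsU x).ne'
    have hcne := hc0.ne'
    simp only [G, D1]
    rw [← hU']
    field_simp
    rw [Real.sqrt_sq (hsU x).le]
    ring
  have hr'x : ∀ t, HasDerivAt (fun t => Real.sqrt (U a (φ t))) (D1 c a (φ t)) t :=
    fun t => by
      have hP : HasDerivAt (fun y => Real.sqrt (U a y))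
          (a * Real.cos (φ t) / 2 / (2 * Real.sqrt (U a (φ t)))) (φ t) :=
        (hasDerivAt_U a (φ t)).sqrt (hUpos (φ t)).ne'
      have h := hP.comp t (hφd t)
      rw [hD1eq (φ t)] at h
      exact h
  have hD1d : ∀ x, HasDerivAt (D1 c a) (D2 c a x) x := fun x => by
    have h1 := ((hasDerivAt_U a x).sqrt (hUpos x).ne').mul
      ((hasDerivAt_V a x).sqrt (hVpos x).ne')
    have h2 := (Real.hasDerivAt_cos x).const_mul (a / c)
    exact h2.mul h1
  have hr''x : ∀ t, HasDerivAt (fun t => D1 c a (φ t))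
      (D2 c a (φ t) * G c a (φ t)) t := fun t => (hD1d (φ t)).comp t (hφd t)
  have hderivr : deriv (fun t => Real.sqrt (U a (φ t))) = fun t => D1 c a (φ t) :=
    funext fun t => (hr'x t).deriv
  have hderiv2 : deriv (fun t => D1 c a (φ t))
      = fun t => D2 c a (φ t) * G c a (φ t) := funext fun t => (hr''x t).deriv
  have hcoQ : ∀ x : ℝ, Real.cos x ^ 2 = 1 - Real.sin x ^ 2 := fun x => Real.cos_sq' x
  have hp2 : ∀ x : ℝ, Real.sqrt ((1 + a * Real.sin x) / 2) ^ 2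
      = (1 + a * Real.sin x) / 2 := fun x => Real.sq_sqrt (hUpos x).le
  have hq2 : ∀ x : ℝ, Real.sqrt ((1 - a * Real.sin x) / 2) ^ 2
      = (1 - a * Real.sin x) / 2 := fun x => Real.sq_sqrt (hVpos x).le
  -- the solution
  refine ⟨fun t => Real.sqrt (U a (φ t)), T, ?_, ?_, ?_, hT, ?_, ?_, ?_⟩
  · -- ContDiff
    have hdiff : Differentiable ℝ (fun t => Real.sqrt (U a (φ t))) :=
      fun t => (hr'x t).differentiableAt
    have hdiff1 : Differentiable ℝ (fun t => D1 c a (φ t)) :=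
      fun t => (hr''x t).differentiableAt
    have cD2 : Continuous (D2 c a) := by
      unfold D2
      apply Continuous.add
      · exact (continuous_const.mul Real.continuous_sin.neg).mul (csU.mul csV)
      · refine (continuous_const.mul Real.continuous_cos).mul (Continuous.add ?_ ?_)
        · exact (((continuous_const.mul Real.continuous_cos).div_const 2).div
            (continuous_const.mul csU) fun x => (mul_pos two_pos (hsU x)).ne').mul csV
        · exact csU.mul (((continuous_const.mul Real.continuous_cos).neg.div_const 2).div
            (continuous_const.mul csV) fun x => (mul_pos two_pos (hsV x)).ne')
    have hcont2 : Continuous fun t => D2 c a (φ t) * G c a (φ t) :=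
      (cD2.comp φcont).mul (cG.comp φcont)
    rw [show (2 : WithTop ℕ∞) = 1 + 1 from one_add_one_eq_two.symm]
    refine contDiff_succ_iff_deriv.mpr ⟨hdiff, by simp, ?_⟩
    rw [hderivr, show (1 : WithTop ℕ∞) = 0 + 1 from (zero_add 1).symm]
    refine contDiff_succ_iff_deriv.mpr ⟨hdiff1, by simp, ?_⟩
    rw [hderiv2]
    exact contDiff_zero.mpr hcont2
  · -- nonconstant
    intro h
    have h12 := h (τ (π / 2)) (τ (-(π / 2)))
    simp only [hφτ] at h12
    have hlt : Real.sqrt (U a (-(π / 2))) < Real.sqrt (U a (π / 2)) := by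
      apply Real.sqrt_lt_sqrt (hUpos _).le
      unfold U
      rw [Real.sin_neg, Real.sin_pi_div_two]
      linarith
    exact absurd h12 hlt.ne'
  · -- bounds
    intro t
    refine ⟨hsU (φ t), ?_⟩
    have h := Real.sqrt_lt_sqrt (hUpos (φ t)).le (hUlt (φ t))
    simpa using h
  · -- periodic
    intro t
    show Real.sqrt (U a (φ (t + T))) = Real.sqrt (U a (φ t))
    rw [hφadd t]
    simp only [U, Real.sin_add_two_pi]
  · -- ODE
    intro t
    simp only [hderivr, hderiv2]
    simp only [D1, D2, G, U, V]
    exact alg_ode c a (Real.sin (φ t)) (Real.cos (φ t))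
      (Real.sqrt ((1 + a * Real.sin (φ t)) / 2)) (Real.sqrt ((1 - a * Real.sin (φ t)) / 2))
      hc0.ne' (hcoQ (φ t)) (hp2 (φ t)) (hq2 (φ t)) ha2
      (Real.sqrt_pos.mpr (hUpos (φ t))).ne' (Real.sqrt_pos.mpr (hVpos (φ t))).ne'
  · -- conserved
    intro t
    simp only [hderivr]
    simp only [D1, U, V]
    exact alg_conserved c a (Real.sin (φ t)) (Real.cos (φ t))
      (Real.sqrt ((1 + a * Real.sin (φ t)) / 2)) (Real.sqrt ((1 - a * Real.sin (φ t)) / 2))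
      hc0.ne' (hcoQ (φ t)) (hp2 (φ t)) (hq2 (φ t)) ha2
      (Real.sqrt_pos.mpr (hUpos (φ t))).ne' (Real.sqrt_pos.mpr (hVpos (φ t))).ne'
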